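/- Let γ : [0, L] → S² be a closed rectifiable curve on the unit sphere with length L < 2π. Then γ is contained in some open hemisphere; i.e., there exists a unit vector w ∈ ℝ³ with ⟨γ(t), w⟩ > 0 for all t. -/

import Mathlib

open Real Set

section helpers
variable {E : Type*} [NormedAddCommGroup E] [InnerProductSpace ℝ E]




section helpers
variable {E : Type*} [NormedAddCommGroup E] [InnerProductSpace ℝ E]

lemma my_abs_inner_le_one {a b : E} (ha : ‖a‖ = 1) (hb : ‖b‖ = 1) :
    |(inner ℝ a b : ℝ)| ≤ 1 := by
  have := abs_real_inner_le_norm a b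
  rwa [ha, hb, mul_one] at this

lemma my_arccos_antitone : Antitone Real.arccos := fun x y h => by
  simp only [Real.arccos_eq_pi_div_two_sub_arcsin]
  exact sub_le_sub_left (Real.monotone_arcsin h) _

lemma sang_triangle {a b c : E} (ha : ‖a‖ = 1) (hb : ‖b‖ = 1) (hc : ‖c‖ = 1) :
    Real.arccos (inner ℝ a c) ≤ Real.arccos (inner ℝ a b) + Real.arccos (inner ℝ b c) := by
  have hs1 : |(inner ℝ a b : ℝ)| ≤ 1 := my_abs_inner_le_one ha hb
  have ht1 : |(inner ℝ b c : ℝ)| ≤ 1 := my_abs_inner_le_one hb hc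
  rcases le_or_gt π (Real.arccos (inner ℝ a b) + Real.arccos (inner ℝ b c)) with h | h
  · exact le_trans (Real.arccos_le_pi _) h
  have hbb : (inner ℝ b b : ℝ) = 1 := by
    rw [real_inner_self_eq_norm_sq, hb]; norm_num
  have haa : (inner ℝ a a : ℝ) = 1 := by
    rw [real_inner_self_eq_norm_sq, ha]; norm_num
  have hcc : (inner ℝ c c : ℝ) = 1 := by
    rw [real_inner_self_eq_norm_sq, hc]; norm_num
  have hip : (inner ℝ (a - (inner ℝ a b : ℝ) • b) (c - (inner ℝ b c : ℝ) • b) : ℝ)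
      = (inner ℝ a c : ℝ) - (inner ℝ a b : ℝ) * (inner ℝ b c : ℝ) := by
    simp only [inner_sub_left, inner_sub_right, real_inner_smul_left, real_inner_smul_right, hbb]
    ring
  have hna : ‖a - (inner ℝ a b : ℝ) • b‖ ^ 2 = 1 - (inner ℝ a b : ℝ) ^ 2 := by
    rw [← real_inner_self_eq_norm_sq]
    simp only [inner_sub_left, inner_sub_right, real_inner_smul_left, real_inner_smul_right,
      hbb, haa]
    rw [real_inner_comm b a]
    ring
  have hnc : ‖c - (inner ℝ b c : ℝ) • b‖ ^ 2 = 1 - (inner ℝ b c : ℝ) ^ 2 := by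
    rw [← real_inner_self_eq_norm_sq]
    simp only [inner_sub_left, inner_sub_right, real_inner_smul_left, real_inner_smul_right,
      hbb, hcc]
    rw [real_inner_comm c b]
    ring
  have hsin_a : Real.sin (Real.arccos (inner ℝ a b)) = ‖a - (inner ℝ a b : ℝ) • b‖ := by
    rw [Real.sin_arccos, ← hna, Real.sqrt_sq (norm_nonneg _)]
  have hsin_c : Real.sin (Real.arccos (inner ℝ b c)) = ‖c - (inner ℝ b c : ℝ) • b‖ := by
    rw [Real.sin_arccos, ← hnc, Real.sqrt_sq (norm_nonneg _)]
  have key : Real.cos (Real.arccos (inner ℝ a b) + Real.arccos (inner ℝ b c)) ≤ (inner ℝ a c : ℝ) := by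
    rw [Real.cos_add, Real.cos_arccos (abs_le.1 hs1).1 (abs_le.1 hs1).2,
      Real.cos_arccos (abs_le.1 ht1).1 (abs_le.1 ht1).2, hsin_a, hsin_c]
    have h2 : -(‖a - (inner ℝ a b : ℝ) • b‖ * ‖c - (inner ℝ b c : ℝ) • b‖)
        ≤ (inner ℝ (a - (inner ℝ a b : ℝ) • b) (c - (inner ℝ b c : ℝ) • b) : ℝ) :=
      neg_le_of_abs_le (abs_real_inner_le_norm _ _)
    rw [hip] at h2
    linarith
  calc Real.arccos (inner ℝ a c)
      ≤ Real.arccos (Real.cos (Real.arccos (inner ℝ a b) + Real.arccos (inner ℝ b c))) :=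
        my_arccos_antitone key
    _ = _ := Real.arccos_cos
        (add_nonneg (Real.arccos_nonneg _) (Real.arccos_nonneg _)) h.le



lemma sang_le_chord {a b : E} (ha : ‖a‖ = 1) (hb : ‖b‖ = 1) :
    Real.arccos (inner ℝ a b) ≤ ‖a - b‖ + ‖a - b‖ ^ 3 := by
  have hs1 : |(inner ℝ a b : ℝ)| ≤ 1 := by
    have := abs_real_inner_le_norm a b
    rwa [ha, hb, mul_one] at this
  set θ : ℝ := Real.arccos (inner ℝ a b) with hθ
  set c : ℝ := ‖a - b‖ with hc
  have hθ0 : 0 ≤ θ := Real.arccos_nonneg _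
  have hθπ : θ ≤ π := Real.arccos_le_pi _
  have hc0 : 0 ≤ c := norm_nonneg _
  -- c = 2 sin (θ/2)
  have hcos : Real.cos θ = inner ℝ a b := Real.cos_arccos (abs_le.1 hs1).1 (abs_le.1 hs1).2
  have hcsq : c ^ 2 = 2 - 2 * Real.cos θ := by
    rw [hcos, hc, norm_sub_sq_real, ha, hb]; ring
  have hsinhalf : Real.sin (θ / 2) ^ 2 = (1 - Real.cos θ) / 2 := by
    have h1 : Real.cos (2 * (θ / 2)) = 2 * Real.cos (θ / 2) ^ 2 - 1 := Real.cos_two_mul _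
    have h2 := Real.sin_sq_add_cos_sq (θ / 2)
    rw [show 2 * (θ / 2) = θ by ring] at h1
    linarith
  have hc2 : c ^ 2 = (2 * Real.sin (θ / 2)) ^ 2 := by
    rw [hcsq]; nlinarith [hsinhalf]
  have hsin0 : 0 ≤ Real.sin (θ / 2) :=
    Real.sin_nonneg_of_nonneg_of_le_pi (by linarith) (by linarith [Real.pi_pos])
  have hceq : c = 2 * Real.sin (θ / 2) := by
    nlinarith [hc2, hc0, hsin0]
  rcases eq_or_lt_of_le hθ0 with h0 | hθpos
  · rw [← h0]; positivity
  rcases le_or_gt θ 2 with h2 | h2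
  · -- small case
    have hx : θ / 2 ≤ 1 := by linarith
    have hxpos : 0 < θ / 2 := by linarith
    have hsin := Real.sin_gt_sub_cube hxpos
    have hcb : θ - θ ^ 3 / 16 < c := by
      rw [hceq]; nlinarith [hsin, pow_nonneg hθ0 3]
    have hcube : θ ^ 3 ≤ 4 * θ := by
      nlinarith [mul_nonneg (mul_nonneg hθ0 (by linarith : (0:ℝ) ≤ 2 - θ)) (by linarith : (0:ℝ) ≤ 2 + θ)]
    have hθc : θ < 4 / 3 * c := by nlinarith
    have h3 : θ ^ 3 < (4 / 3 * c) ^ 3 := pow_lt_pow_left₀ hθc hθ0 (by norm_num)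
    have hc3 : 0 ≤ c ^ 3 := by positivity
    nlinarith [hcb, h3, hc3]
  · -- large case: θ > 2, so c > 3/2 and c + c^3 > π
    have hsin1 : Real.sin 1 > 3 / 4 := by
      have := Real.sin_gt_sub_cube (by norm_num : (0:ℝ) < 1)
      norm_num at this; linarith
    have hmono : Real.sin 1 ≤ Real.sin (θ / 2) := by
      apply Real.sin_le_sin_of_le_of_le_pi_div_two (by linarith [Real.pi_pos]) (by linarith) (by linarith)
    have hcbig : 3 / 2 < c := by rw [hceq]; linarith
    have : π < 3.15 := Real.pi_lt_d2
    have hc3 : (3 / 2 : ℝ) ^ 3 < c ^ 3 := pow_lt_pow_left₀ hcbig (by norm_num) (by norm_num)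
    norm_num at hc3
    linarith

end helpers




lemma sang_self {a : E} (ha : ‖a‖ = 1) : Real.arccos (inner ℝ a a) = 0 := by
  rw [real_inner_self_eq_norm_sq, ha]
  norm_num [Real.arccos_one]

lemma sang_chain (f : ℕ → E) (hf : ∀ i, ‖f i‖ = 1) (m : ℕ) :
    Real.arccos (inner ℝ (f 0) (f m)) ≤
      ∑ i ∈ Finset.range m, Real.arccos (inner ℝ (f i) (f (i + 1))) := by
  induction m with
  | zero => simp [hf 0, Real.arccos_one]
  | succ m ih =>
    rw [Finset.sum_range_succ]
    calc Real.arccos (inner ℝ (f 0) (f (m + 1)))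
        ≤ Real.arccos (inner ℝ (f 0) (f m)) + Real.arccos (inner ℝ (f m) (f (m + 1))) :=
          sang_triangle (hf 0) (hf m) (hf (m + 1))
      _ ≤ _ := by linarith

end helpers

lemma key_lemma {γ : ℝ → EuclideanSpace ℝ (Fin 3)} {a b : ℝ} (hab : a ≤ b)
    (hcont : ContinuousOn γ (Icc a b)) (hnorm : ∀ t ∈ Icc a b, ‖γ t‖ = 1)
    (hfin : eVariationOn γ (Icc a b) ≠ ⊤) :
    Real.arccos (inner ℝ (γ a) (γ b)) ≤ (eVariationOn γ (Icc a b)).toReal := by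
  rcases eq_or_lt_of_le hab with rfl | hab'
  · rw [sang_self (hnorm a (by simp))]
    exact ENNReal.toReal_nonneg
  set VT : ℝ := (eVariationOn γ (Icc a b)).toReal with hVT
  have hVT0 : 0 ≤ VT := ENNReal.toReal_nonneg
  refine le_of_forall_pos_le_add fun ε hε => ?_
  -- choose η
  set η : ℝ := Real.sqrt (ε / (VT + 1)) ⊓ 1 with hη
  have hηpos : 0 < η := by
    apply lt_min _ one_pos
    apply Real.sqrt_pos.2
    positivity
  have hη2 : η ^ 2 * VT ≤ ε := by
    have h1 : η ^ 2 ≤ ε / (VT + 1) := by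
      have : η ≤ Real.sqrt (ε / (VT + 1)) := min_le_left _ _
      calc η ^ 2 ≤ Real.sqrt (ε / (VT + 1)) ^ 2 := by
            apply pow_le_pow_left₀ hηpos.le this
        _ = ε / (VT + 1) := Real.sq_sqrt (by positivity)
    calc η ^ 2 * VT ≤ ε / (VT + 1) * VT := by
          apply mul_le_mul_of_nonneg_right h1 hVT0
      _ ≤ ε := by rw [div_mul_eq_mul_div, div_le_iff₀ (by positivity)]; nlinarith
  -- uniform continuity
  have hUC : UniformContinuousOn γ (Icc a b) :=
    isCompact_Icc.uniformContinuousOn_of_continuous hcont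
  obtain ⟨δ, hδpos, hδ⟩ := Metric.uniformContinuousOn_iff.1 hUC η hηpos
  -- choose n
  obtain ⟨n, hn⟩ := exists_nat_gt ((b - a) / δ)
  have hn0 : 0 < (n : ℝ) := lt_of_le_of_lt (div_nonneg (by linarith) hδpos.le) hn
  have hnn : 0 < n := by exact_mod_cast hn0
  have hstep : (b - a) / n < δ := by
    rw [div_lt_iff₀ hn0]
    rw [div_lt_iff₀ hδpos] at hn
    linarith [hn, mul_comm δ (n:ℝ)]
  -- partition
  set u : ℕ → ℝ := fun i => a + (min i n : ℕ) * ((b - a) / n) with hu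
  have hmono : Monotone u := by
    intro i j hij
    simp only [hu]
    have : ((min i n : ℕ) : ℝ) ≤ ((min j n : ℕ) : ℝ) := by
      exact_mod_cast min_le_min_right n hij
    have hba : 0 ≤ (b - a) / n := div_nonneg (by linarith) hn0.le
    nlinarith
  have humem : ∀ i, u i ∈ Icc a b := by
    intro i
    constructor
    · simp only [hu]
      have hba : 0 ≤ ((min i n : ℕ) : ℝ) * ((b - a) / n) :=
        mul_nonneg (Nat.cast_nonneg _) (div_nonneg (by linarith) hn0.le)
      linarith
    · simp only [hu]
      have h1 : ((min i n : ℕ) : ℝ) ≤ n := by exact_mod_cast min_le_right i n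
      have hba : 0 ≤ (b - a) / n := div_nonneg (by linarith) hn0.le
      have h2 : ((min i n : ℕ) : ℝ) * ((b - a) / n) ≤ n * ((b - a) / n) :=
        mul_le_mul_of_nonneg_right h1 hba
      have h3 : (n : ℝ) * ((b - a) / n) = b - a := by field_simp
      linarith
  have hu0 : u 0 = a := by simp [hu]
  have hun : u n = b := by
    simp only [hu, min_self]
    field_simp
    ring
  have hdiff : ∀ i, u (i + 1) - u i ≤ (b - a) / n := by
    intro i
    simp only [hu]
    have h1 : ((min (i+1) n : ℕ) : ℝ) - (min i n : ℕ) ≤ 1 := by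
      have : min (i+1) n ≤ min i n + 1 := by omega
      have h2 : ((min (i+1) n : ℕ) : ℝ) ≤ (min i n : ℕ) + 1 := by exact_mod_cast this
      linarith
    have hba : 0 ≤ (b - a) / n := div_nonneg (by linarith) hn0.le
    nlinarith
  -- distances
  have hdistsmall : ∀ i, dist (γ (u i)) (γ (u (i + 1))) < η := by
    intro i
    apply hδ _ (humem i) _ (humem (i+1))
    rw [Real.dist_eq, abs_sub_comm, abs_of_nonneg (by linarith [hmono (Nat.le_succ i)] : 0 ≤ u (i+1) - u i)]
    exact lt_of_le_of_lt (hdiff i) hstep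
  -- sum of dists ≤ VT
  have hsumle : ∑ i ∈ Finset.range n, dist (γ (u (i + 1))) (γ (u i)) ≤ VT := by
    have h1 := eVariationOn.sum_le (f := γ) (n := n) hmono humem
    have h2 : ∑ i ∈ Finset.range n, edist (γ (u (i + 1))) (γ (u i))
        = ENNReal.ofReal (∑ i ∈ Finset.range n, dist (γ (u (i + 1))) (γ (u i))) := by
      rw [ENNReal.ofReal_sum_of_nonneg (fun i _ => dist_nonneg)]
      refine Finset.sum_congr rfl fun i _ => (edist_dist _ _)
    rw [h2] at h1
    exact (ENNReal.ofReal_le_iff_le_toReal hfin).1 h1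
  -- chain
  have hnormu : ∀ i, ‖γ (u i)‖ = 1 := fun i => hnorm _ (humem i)
  have hchain := sang_chain (fun i => γ (u i)) hnormu n
  simp only [hu0, hun] at hchain
  have hterm : ∀ i ∈ Finset.range n, Real.arccos (inner ℝ (γ (u i)) (γ (u (i + 1))))
      ≤ (1 + η ^ 2) * dist (γ (u (i + 1))) (γ (u i)) := by
    intro i _
    have h1 := sang_le_chord (hnormu i) (hnormu (i + 1))
    have h2 : ‖γ (u i) - γ (u (i + 1))‖ = dist (γ (u (i + 1))) (γ (u i)) := by
      rw [dist_comm, dist_eq_norm]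
    rw [h2] at h1
    have hd : dist (γ (u (i + 1))) (γ (u i)) < η := by
      rw [dist_comm]; exact hdistsmall i
    have hd0 : 0 ≤ dist (γ (u (i + 1))) (γ (u i)) := dist_nonneg
    have hsq : dist (γ (u (i + 1))) (γ (u i)) ^ 2 ≤ η ^ 2 := by nlinarith
    have : dist (γ (u (i + 1))) (γ (u i)) ^ 3 ≤ η ^ 2 * dist (γ (u (i + 1))) (γ (u i)) := by
      calc dist (γ (u (i + 1))) (γ (u i)) ^ 3
          = dist (γ (u (i + 1))) (γ (u i)) ^ 2 * dist (γ (u (i + 1))) (γ (u i)) := by ring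
        _ ≤ η ^ 2 * dist (γ (u (i + 1))) (γ (u i)) := mul_le_mul_of_nonneg_right hsq hd0
    nlinarith [h1, this]
  calc Real.arccos (inner ℝ (γ a) (γ b))
      ≤ ∑ i ∈ Finset.range n, Real.arccos (inner ℝ (γ (u i)) (γ (u (i + 1)))) := hchain
    _ ≤ ∑ i ∈ Finset.range n, (1 + η ^ 2) * dist (γ (u (i + 1))) (γ (u i)) :=
        Finset.sum_le_sum hterm
    _ = (1 + η ^ 2) * ∑ i ∈ Finset.range n, dist (γ (u (i + 1))) (γ (u i)) := by
        rw [Finset.mul_sum]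
    _ ≤ (1 + η ^ 2) * VT := by
        apply mul_le_mul_of_nonneg_left hsumle (by positivity)
    _ = VT + η ^ 2 * VT := by ring
    _ ≤ VT + ε := by linarith [hη2]



lemma Icc_add_Icc' {F : Type*} [PseudoEMetricSpace F] (f : ℝ → F) {a b c : ℝ}
    (hab : a ≤ b) (hbc : b ≤ c) :
    eVariationOn f (Icc a b) + eVariationOn f (Icc b c) = eVariationOn f (Icc a c) := by
  have := eVariationOn.Icc_add_Icc f (s := univ) hab hbc (mem_univ b)
  simpa using this

lemma small_var_right {F : Type*} [PseudoMetricSpace F] {γ : ℝ → F} {a b : ℝ} (hab : a ≤ b)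
    (hcont : ContinuousOn γ (Icc a b)) (hfin : eVariationOn γ (Icc a b) ≠ ⊤)
    {ε : ℝ} (hε : 0 < ε) :
    ∃ δ > 0, ∀ t ∈ Icc a b, t - a < δ → eVariationOn γ (Icc a t) ≤ ENNReal.ofReal ε := by
  by_cases hW0 : eVariationOn γ (Icc a b) = 0
  · refine ⟨1, one_pos, fun t ht _ => ?_⟩
    have h1 : eVariationOn γ (Icc a t) ≤ eVariationOn γ (Icc a b) :=
      eVariationOn.mono γ (Icc_subset_Icc le_rfl ht.2)
    rw [hW0] at h1
    exact le_trans h1 zero_le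
  · have hc0 : ENNReal.ofReal (ε / 2) ≠ 0 := by
      simp only [ne_eq, ENNReal.ofReal_eq_zero, not_le]; linarith
    have hsub : eVariationOn γ (Icc a b) - ENNReal.ofReal (ε / 2) < eVariationOn γ (Icc a b) :=
      ENNReal.sub_lt_self hfin hW0 hc0
    unfold eVariationOn at hsub
    obtain ⟨⟨n, u, hu, us⟩, hp⟩ := lt_iSup_iff.1 hsub
    simp only at hp
    have hS : eVariationOn γ (Icc a b) ≤
        (∑ i ∈ Finset.range n, edist (γ (u (i + 1))) (γ (u i))) + ENNReal.ofReal (ε / 2) := by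
      have h2 : eVariationOn γ (Icc a b) - ENNReal.ofReal (ε / 2) ≤
          ∑ i ∈ Finset.range n, edist (γ (u (i + 1))) (γ (u i)) := hp.le
      exact tsub_le_iff_right.1 h2
    -- uniform continuity
    set η : ℝ := ε / (4 * n + 4) with hηdef
    have hηpos : 0 < η := by positivity
    have hUC : UniformContinuousOn γ (Icc a b) :=
      isCompact_Icc.uniformContinuousOn_of_continuous hcont
    obtain ⟨δ, hδpos, hδ⟩ := Metric.uniformContinuousOn_iff.1 hUC η hηpos
    refine ⟨δ, hδpos, fun t ht htδ => ?_⟩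
    set v : ℕ → ℝ := fun i => max (u i) t with hvdef
    have hv : Monotone v := fun i j hij => max_le_max (hu hij) le_rfl
    have hvm : ∀ i, v i ∈ Icc t b := fun i => ⟨le_max_right _ _, max_le (us i).2 ht.2⟩
    have hSv := eVariationOn.sum_le (f := γ) (n := n) hv hvm
    have hclose : ∀ i, edist (γ (u i)) (γ (v i)) ≤ ENNReal.ofReal η := by
      intro i
      rcases le_or_gt t (u i) with h | h
      · have hvi : v i = u i := max_eq_left h
        rw [hvi, edist_self]; exact zero_le
      · have hvi : v i = t := max_eq_right h.le
        rw [edist_dist]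
        apply ENNReal.ofReal_le_ofReal
        apply le_of_lt
        apply hδ (u i) (us i) (v i) (by rw [hvi]; exact ht)
        rw [hvi, Real.dist_eq, abs_of_nonpos (by linarith)]
        have := (us i).1
        linarith
    have hterm : ∀ i ∈ Finset.range n, edist (γ (u (i + 1))) (γ (u i)) ≤
        edist (γ (v (i + 1))) (γ (v i)) + (ENNReal.ofReal η + ENNReal.ofReal η) := by
      intro i _
      calc edist (γ (u (i + 1))) (γ (u i))
          ≤ edist (γ (u (i + 1))) (γ (v (i + 1))) + edist (γ (v (i + 1))) (γ (v i))
            + edist (γ (v i)) (γ (u i)) := edist_triangle4 _ _ _ _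
        _ ≤ ENNReal.ofReal η + edist (γ (v (i + 1))) (γ (v i)) + ENNReal.ofReal η := by
            gcongr
            · exact hclose (i + 1)
            · rw [edist_comm]; exact hclose i
        _ = edist (γ (v (i + 1))) (γ (v i)) + (ENNReal.ofReal η + ENNReal.ofReal η) := by
            ring
    have hsum2 : (∑ i ∈ Finset.range n, edist (γ (u (i + 1))) (γ (u i)))
        ≤ eVariationOn γ (Icc t b) + ENNReal.ofReal (ε / 2) := by
      calc (∑ i ∈ Finset.range n, edist (γ (u (i + 1))) (γ (u i)))
          ≤ ∑ i ∈ Finset.range n,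
              (edist (γ (v (i + 1))) (γ (v i)) + (ENNReal.ofReal η + ENNReal.ofReal η)) :=
            Finset.sum_le_sum hterm
        _ = (∑ i ∈ Finset.range n, edist (γ (v (i + 1))) (γ (v i)))
            + n * (ENNReal.ofReal η + ENNReal.ofReal η) := by
            rw [Finset.sum_add_distrib, Finset.sum_const, Finset.card_range, nsmul_eq_mul]
        _ ≤ eVariationOn γ (Icc t b) + ENNReal.ofReal (ε / 2) := by
            gcongr
            have h1 : (ENNReal.ofReal η + ENNReal.ofReal η) = ENNReal.ofReal (2 * η) := by
              rw [two_mul, ENNReal.ofReal_add hηpos.le hηpos.le]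
            rw [h1, ← ENNReal.ofReal_natCast n, ← ENNReal.ofReal_mul (Nat.cast_nonneg n)]
            apply ENNReal.ofReal_le_ofReal
            rw [hηdef]
            have h4 : (0:ℝ) < 4 * (n : ℝ) + 4 := by positivity
            calc (n : ℝ) * (2 * (ε / (4 * (n:ℝ) + 4))) = 2 * (n:ℝ) / (4 * (n:ℝ) + 4) * ε := by
                  field_simp
              _ ≤ 1 / 2 * ε := by
                  apply mul_le_mul_of_nonneg_right _ hε.le
                  rw [div_le_iff₀ h4]
                  linarith [Nat.cast_nonneg (α := ℝ) n]
              _ = ε / 2 := by ring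
    -- combine
    have hadd : eVariationOn γ (Icc a t) + eVariationOn γ (Icc t b)
        = eVariationOn γ (Icc a b) := Icc_add_Icc' γ ht.1 ht.2
    have hfin2 : eVariationOn γ (Icc t b) ≠ ⊤ := by
      intro hcontr
      apply hfin
      rw [← hadd, hcontr, add_top]
    have hfinal : eVariationOn γ (Icc a t) + eVariationOn γ (Icc t b)
        ≤ ENNReal.ofReal ε + eVariationOn γ (Icc t b) := by
      rw [hadd]
      calc eVariationOn γ (Icc a b)
          ≤ (∑ i ∈ Finset.range n, edist (γ (u (i + 1))) (γ (u i))) + ENNReal.ofReal (ε / 2) := hS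
        _ ≤ eVariationOn γ (Icc t b) + ENNReal.ofReal (ε / 2) + ENNReal.ofReal (ε / 2) := by
            gcongr
        _ = ENNReal.ofReal ε + eVariationOn γ (Icc t b) := by
            rw [add_assoc, ← ENNReal.ofReal_add (by linarith) (by linarith)]
            rw [add_halves, add_comm]
    rw [add_comm (eVariationOn γ (Icc a t)) _, add_comm (ENNReal.ofReal ε) _] at hfinal
    exact (ENNReal.add_le_add_iff_left hfin2).1 hfinal

lemma small_var_left {F : Type*} [PseudoMetricSpace F] {γ : ℝ → F} {a b : ℝ} (hab : a ≤ b)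
    (hcont : ContinuousOn γ (Icc a b)) (hfin : eVariationOn γ (Icc a b) ≠ ⊤)
    {ε : ℝ} (hε : 0 < ε) :
    ∃ δ > 0, ∀ t ∈ Icc a b, b - t < δ → eVariationOn γ (Icc t b) ≤ ENNReal.ofReal ε := by
  set φ : ℝ → ℝ := fun s => a + b - s with hφdef
  have hφanti : ∀ {u : Set ℝ}, AntitoneOn φ u := fun {u} x _ y _ hxy => by
    simp only [hφdef]; linarith
  have hφim : ∀ c d : ℝ, φ '' Icc c d = Icc (a + b - d) (a + b - c) := by
    intro c d
    have : φ = fun s => a + b - s := rfl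
    rw [this, Set.image_const_sub_Icc]
  have hvar : ∀ s ∈ Icc a b, eVariationOn (γ ∘ φ) (Icc a s) = eVariationOn γ (Icc (a + b - s) b) := by
    intro s hs
    rw [eVariationOn.comp_eq_of_antitoneOn γ φ hφanti, hφim]
    congr 1
    rw [show a + b - a = b by ring]
  have hcont' : ContinuousOn (γ ∘ φ) (Icc a b) := by
    apply hcont.comp ((continuous_const.sub continuous_id).continuousOn)
    intro x hx
    show a + b - x ∈ Icc a b
    constructor <;> linarith [hx.1, hx.2]
  have hfin' : eVariationOn (γ ∘ φ) (Icc a b) ≠ ⊤ := by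
    rw [hvar b ⟨hab, le_rfl⟩, show a + b - b = a by ring]
    exact hfin
  obtain ⟨δ, hδpos, hδ⟩ := small_var_right hab hcont' hfin' hε
  refine ⟨δ, hδpos, fun t ht htδ => ?_⟩
  have hs : a + b - t ∈ Icc a b := ⟨by linarith [ht.2], by linarith [ht.1]⟩
  have := hδ (a + b - t) hs (by linarith)
  rwa [hvar (a + b - t) hs, show a + b - (a + b - t) = t by ring] at this

lemma variation_continuousOn {F : Type*} [PseudoMetricSpace F] {γ : ℝ → F} {L : ℝ}
    (hL : 0 ≤ L) (hcont : ContinuousOn γ (Icc 0 L)) (hfin : eVariationOn γ (Icc 0 L) ≠ ⊤) :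
    ContinuousOn (fun t => (eVariationOn γ (Icc 0 t)).toReal) (Icc 0 L) := by
  rw [Metric.continuousOn_iff]
  intro t₀ ht₀ ε hε
  have hfinR : eVariationOn γ (Icc t₀ L) ≠ ⊤ :=
    fun h => hfin (top_le_iff.1 (h ▸ eVariationOn.mono γ (Icc_subset_Icc ht₀.1 le_rfl)))
  have hfinL : eVariationOn γ (Icc 0 t₀) ≠ ⊤ :=
    fun h => hfin (top_le_iff.1 (h ▸ eVariationOn.mono γ (Icc_subset_Icc le_rfl ht₀.2)))
  obtain ⟨δ₁, hδ₁pos, hδ₁⟩ := small_var_right ht₀.2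
    (hcont.mono (Icc_subset_Icc ht₀.1 le_rfl)) hfinR (half_pos hε)
  obtain ⟨δ₂, hδ₂pos, hδ₂⟩ := small_var_left ht₀.1
    (hcont.mono (Icc_subset_Icc le_rfl ht₀.2)) hfinL (half_pos hε)
  refine ⟨min δ₁ δ₂, lt_min hδ₁pos hδ₂pos, fun t ht hd => ?_⟩
  rw [Real.dist_eq] at hd
  rcases le_total t t₀ with hle | hle
  · -- left
    have hfin1 : eVariationOn γ (Icc 0 t) ≠ ⊤ :=
      fun h => hfinL (top_le_iff.1 (h ▸ eVariationOn.mono γ (Icc_subset_Icc le_rfl hle)))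
    have hfin2 : eVariationOn γ (Icc t t₀) ≠ ⊤ :=
      fun h => hfinL (top_le_iff.1 (h ▸ eVariationOn.mono γ (Icc_subset_Icc ht.1 le_rfl)))
    have hadd : eVariationOn γ (Icc 0 t) + eVariationOn γ (Icc t t₀)
        = eVariationOn γ (Icc 0 t₀) := Icc_add_Icc' γ ht.1 hle
    have hlt2 : t₀ - t < δ₂ := by
      have h2 : |t₀ - t| < min δ₁ δ₂ := by rwa [abs_sub_comm] at hd
      exact lt_of_lt_of_le (lt_of_le_of_lt (le_abs_self _) h2) (min_le_right _ _)
    have hvv := hδ₂ t ⟨ht.1, hle⟩ hlt2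
    have htr : (eVariationOn γ (Icc t t₀)).toReal ≤ ε / 2 :=
      ENNReal.toReal_le_of_le_ofReal (by linarith) hvv
    rw [Real.dist_eq]
    have heq : (eVariationOn γ (Icc 0 t₀)).toReal
        = (eVariationOn γ (Icc 0 t)).toReal + (eVariationOn γ (Icc t t₀)).toReal := by
      rw [← ENNReal.toReal_add hfin1 hfin2, hadd]
    rw [abs_of_nonpos (by
      rw [heq]; linarith [ENNReal.toReal_nonneg (a := eVariationOn γ (Icc t t₀))])]
    rw [heq]
    linarith [ENNReal.toReal_nonneg (a := eVariationOn γ (Icc t t₀))]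
  · -- right
    have hfin1 : eVariationOn γ (Icc 0 t) ≠ ⊤ :=
      fun h => hfin (top_le_iff.1 (h ▸ eVariationOn.mono γ (Icc_subset_Icc le_rfl ht.2)))
    have hfin2 : eVariationOn γ (Icc t₀ t) ≠ ⊤ :=
      fun h => hfinR (top_le_iff.1 (h ▸ eVariationOn.mono γ (Icc_subset_Icc le_rfl ht.2)))
    have hadd : eVariationOn γ (Icc 0 t₀) + eVariationOn γ (Icc t₀ t)
        = eVariationOn γ (Icc 0 t) := Icc_add_Icc' γ ht₀.1 hle
    have hlt1 : t - t₀ < δ₁ :=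
      lt_of_lt_of_le (lt_of_le_of_lt (le_abs_self _) hd) (min_le_left _ _)
    have hvv := hδ₁ t ⟨hle, ht.2⟩ hlt1
    have htr : (eVariationOn γ (Icc t₀ t)).toReal ≤ ε / 2 :=
      ENNReal.toReal_le_of_le_ofReal (by linarith) hvv
    rw [Real.dist_eq]
    have heq : (eVariationOn γ (Icc 0 t)).toReal
        = (eVariationOn γ (Icc 0 t₀)).toReal + (eVariationOn γ (Icc t₀ t)).toReal := by
      rw [← ENNReal.toReal_add hfinL hfin2, hadd]
    rw [abs_of_nonneg (by
      rw [heq]; linarith [ENNReal.toReal_nonneg (a := eVariationOn γ (Icc t₀ t))])]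
    rw [heq]
    linarith [ENNReal.toReal_nonneg (a := eVariationOn γ (Icc t₀ t))]


/-- A closed rectifiable curve on the unit sphere `S² ⊂ ℝ³` of length `< 2π`
is contained in an open hemisphere. -/





theorem stmt7 (L : ℝ) (hL : 0 < L) (γ : ℝ → EuclideanSpace ℝ (Fin 3))
    (hcont : ContinuousOn γ (Set.Icc 0 L))
    (hsph : ∀ t ∈ Set.Icc 0 L, ‖γ t‖ = 1)
    (hclosed : γ 0 = γ L)
    (hlen : eVariationOn γ (Set.Icc 0 L) < ENNReal.ofReal (2 * Real.pi)) :
    ∃ w : EuclideanSpace ℝ (Fin 3), ‖w‖ = 1 ∧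
      ∀ t ∈ Set.Icc 0 L, 0 < (inner ℝ (γ t) w : ℝ) := by
  have hfin : eVariationOn γ (Icc 0 L) ≠ ⊤ := ne_top_of_lt hlen
  set V : ℝ := (eVariationOn γ (Icc 0 L)).toReal with hVdef
  have hV0 : 0 ≤ V := ENNReal.toReal_nonneg
  have hV2π : V < 2 * π := by
    rw [hVdef]
    exact (ENNReal.lt_ofReal_iff_toReal_lt hfin).1 hlen
  -- bisection point
  have hgc := variation_continuousOn hL.le hcont hfin
  have hg0 : (eVariationOn γ (Icc (0:ℝ) 0)).toReal = 0 := by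
    rw [Set.Icc_self, eVariationOn.subsingleton γ subsingleton_singleton]
    simp
  have hIVT := intermediate_value_Icc hL.le hgc
  have hmem : V / 2 ∈ Icc ((eVariationOn γ (Icc (0:ℝ) 0)).toReal)
      ((eVariationOn γ (Icc (0:ℝ) L)).toReal) := by
    rw [hg0]
    exact ⟨by linarith, by linarith⟩
  obtain ⟨t₀, ht₀mem, ht₀⟩ := hIVT hmem
  simp only at ht₀
  have hfin1 : eVariationOn γ (Icc 0 t₀) ≠ ⊤ :=
    fun h => hfin (top_le_iff.1 (h ▸ eVariationOn.mono γ (Icc_subset_Icc le_rfl ht₀mem.2)))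
  have hfin2 : eVariationOn γ (Icc t₀ L) ≠ ⊤ :=
    fun h => hfin (top_le_iff.1 (h ▸ eVariationOn.mono γ (Icc_subset_Icc ht₀mem.1 le_rfl)))
  have hA : (eVariationOn γ (Icc 0 t₀)).toReal = V / 2 := ht₀
  have hB : (eVariationOn γ (Icc t₀ L)).toReal = V / 2 := by
    have hadd := Icc_add_Icc' γ ht₀mem.1 ht₀mem.2
    have h2 : (eVariationOn γ (Icc 0 t₀)).toReal + (eVariationOn γ (Icc t₀ L)).toReal = V := by
      rw [← ENNReal.toReal_add hfin1 hfin2, hadd]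
    linarith
  have hAπ : V / 2 < π := by linarith
  -- p, q, w
  have hp1 : ‖γ 0‖ = 1 := hsph 0 ⟨le_rfl, hL.le⟩
  have hq1 : ‖γ t₀‖ = 1 := hsph t₀ ht₀mem
  have hkey0 : Real.arccos (inner ℝ (γ 0) (γ t₀)) ≤ V / 2 := by
    rw [← hA]
    exact key_lemma ht₀mem.1 (hcont.mono (Icc_subset_Icc le_rfl ht₀mem.2))
      (fun t ht => hsph t ⟨ht.1, le_trans ht.2 ht₀mem.2⟩) hfin1
  have hpq : -1 < (inner ℝ (γ 0) (γ t₀) : ℝ) := by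
    by_contra h
    push_neg at h
    rw [Real.arccos_of_le_neg_one h] at hkey0
    linarith
  have hnsq : ‖γ 0 + γ t₀‖ ^ 2 = 2 + 2 * (inner ℝ (γ 0) (γ t₀) : ℝ) := by
    rw [norm_add_sq_real, hp1, hq1]; ring
  have hnpos : 0 < ‖γ 0 + γ t₀‖ := by
    nlinarith [norm_nonneg (γ 0 + γ t₀)]
  set w : EuclideanSpace ℝ (Fin 3) := ‖γ 0 + γ t₀‖⁻¹ • (γ 0 + γ t₀) with hwdef
  have hw1 : ‖w‖ = 1 := by
    rw [hwdef, norm_smul, norm_inv, norm_norm, inv_mul_cancel₀ hnpos.ne']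
  refine ⟨w, hw1, ?_⟩
  by_contra hcon
  push_neg at hcon
  obtain ⟨t₁, ht₁, hneg⟩ := hcon
  have hpp : (inner ℝ (γ 0) (γ 0) : ℝ) = 1 := by
    rw [real_inner_self_eq_norm_sq, hp1]; norm_num
  have hinner0 : 0 < (inner ℝ (γ 0) w : ℝ) := by
    rw [hwdef, real_inner_smul_right, inner_add_right, hpp]
    exact mul_pos (inv_pos.2 hnpos) (by linarith)
  -- IVT to find zero of inner
  have hcont2 : ContinuousOn (fun t => (inner ℝ (γ t) w : ℝ)) (Icc 0 L) :=
    ContinuousOn.inner hcont continuousOn_const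
  have hsub01 : Icc 0 t₁ ⊆ Icc 0 L := Icc_subset_Icc le_rfl ht₁.2
  have hIVT2 := intermediate_value_Icc' ht₁.1 (hcont2.mono hsub01)
  have h0mem : (0:ℝ) ∈ Icc ((inner ℝ (γ t₁) w : ℝ)) ((inner ℝ (γ 0) w : ℝ)) := ⟨hneg, hinner0.le⟩
  obtain ⟨s, hsmem, hs0⟩ := hIVT2 h0mem
  simp only at hs0
  have hsL : s ∈ Icc 0 L := hsub01 hsmem
  have hsx1 : ‖γ s‖ = 1 := hsph s hsL
  have hxpq : (inner ℝ (γ s) (γ 0 + γ t₀) : ℝ) = 0 := by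
    have h1 : (inner ℝ (γ s) w : ℝ) = ‖γ 0 + γ t₀‖⁻¹ * inner ℝ (γ s) (γ 0 + γ t₀) := by
      rw [hwdef, real_inner_smul_right]
    rw [hs0] at h1
    have h2 := h1.symm
    rcases mul_eq_zero.1 h2 with h | h
    · exact absurd h (inv_ne_zero hnpos.ne')
    · exact h
  have hxq : (inner ℝ (γ s) (γ t₀) : ℝ) = - (inner ℝ (γ s) (γ 0) : ℝ) := by
    rw [inner_add_right] at hxpq
    linarith
  -- final contradiction, two cases
  rcases le_total s t₀ with hc | hc
  · have hfin1a : eVariationOn γ (Icc 0 s) ≠ ⊤ :=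
      fun h => hfin1 (top_le_iff.1 (h ▸ eVariationOn.mono γ (Icc_subset_Icc le_rfl hc)))
    have hfin1b : eVariationOn γ (Icc s t₀) ≠ ⊤ :=
      fun h => hfin1 (top_le_iff.1 (h ▸ eVariationOn.mono γ (Icc_subset_Icc hsL.1 le_rfl)))
    have k1 := key_lemma hsL.1 (hcont.mono (Icc_subset_Icc le_rfl hsL.2))
      (fun t ht => hsph t ⟨ht.1, le_trans ht.2 hsL.2⟩) hfin1a
    have k2 := key_lemma hc
      (hcont.mono (Icc_subset_Icc hsL.1 ht₀mem.2))
      (fun t ht => hsph t ⟨le_trans hsL.1 ht.1, le_trans ht.2 ht₀mem.2⟩) hfin1b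
    have hsum : (eVariationOn γ (Icc 0 s)).toReal + (eVariationOn γ (Icc s t₀)).toReal
        = V / 2 := by
      rw [← ENNReal.toReal_add hfin1a hfin1b, Icc_add_Icc' γ hsL.1 hc, hA]
    have harc : Real.arccos (inner ℝ (γ s) (γ t₀)) = π - Real.arccos (inner ℝ (γ s) (γ 0)) := by
      rw [hxq, Real.arccos_neg]
    have hcomm : Real.arccos (inner ℝ (γ 0) (γ s)) = Real.arccos (inner ℝ (γ s) (γ 0)) := by
      rw [real_inner_comm]
    rw [hcomm] at k1
    rw [harc] at k2
    linarith
  · have hfin2a : eVariationOn γ (Icc t₀ s) ≠ ⊤ :=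
      fun h => hfin2 (top_le_iff.1 (h ▸ eVariationOn.mono γ (Icc_subset_Icc le_rfl hsL.2)))
    have hfin2b : eVariationOn γ (Icc s L) ≠ ⊤ :=
      fun h => hfin2 (top_le_iff.1 (h ▸ eVariationOn.mono γ (Icc_subset_Icc hc le_rfl)))
    have k1 := key_lemma hc (hcont.mono (Icc_subset_Icc ht₀mem.1 hsL.2))
      (fun t ht => hsph t ⟨le_trans ht₀mem.1 ht.1, le_trans ht.2 hsL.2⟩) hfin2a
    have k2 := key_lemma hsL.2 (hcont.mono (Icc_subset_Icc hsL.1 le_rfl))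
      (fun t ht => hsph t ⟨le_trans hsL.1 ht.1, ht.2⟩) hfin2b
    have hsum : (eVariationOn γ (Icc t₀ s)).toReal + (eVariationOn γ (Icc s L)).toReal
        = V / 2 := by
      rw [← ENNReal.toReal_add hfin2a hfin2b, Icc_add_Icc' γ hc hsL.2, hB]
    have harc : Real.arccos (inner ℝ (γ t₀) (γ s)) = π - Real.arccos (inner ℝ (γ s) (γ 0)) := by
      rw [real_inner_comm, hxq, Real.arccos_neg]
    have hgLcl : Real.arccos (inner ℝ (γ s) (γ L)) = Real.arccos (inner ℝ (γ s) (γ 0)) := by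
      rw [← hclosed]
    rw [harc] at k1
    rw [hgLcl] at k2
    linarith
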